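/- (Theorem B) Let q be a complex number with 0 < |q| < 1 and q not equal to 1, let l be a positive integer, and let k be an integer with k ≥ 2. Define, for x a real (or complex) number, the q-Bernoulli polynomial value B_{l,q}(x) = −(log q)·Σ_{n=0}^∞ q^n·(n+x)^l − l·Σ_{n=0}^∞ q^n·(n+x)^{l−1}, where log denotes the principal complex logarithm (these series converge since |q| < 1). Then q^{−k}·l·S_{l−1,q}(k) + (q^{−k}·log q)·S_{l,q}(k) = B_{l,q}(k) − q^{−k}·B_{l,q}(0); equivalently, q^{−k}·S_{l−1,q}(k) + (q^{−k}·log q)·(S_{l,q}(k)/l) = (B_{l,q}(k) − q^{−k}·B_{l,q}(0))/l. -/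

import Mathlib

theorem theorem_B (q : ℂ) (hq0 : 0 < ‖q‖) (hq1 : ‖q‖ < 1)
    (hq : q ≠ 1) (l : ℕ) (hl : 1 ≤ l) (k : ℕ) (hk : 2 ≤ k)
    (B : ℕ → ℂ → ℂ)
    (hB : ∀ (m : ℕ) (x : ℂ), 1 ≤ m →
      B m x = -(Complex.log q) * (∑' n : ℕ, q ^ n * ((n : ℂ) + x) ^ m)
        - (m : ℂ) * (∑' n : ℕ, q ^ n * ((n : ℂ) + x) ^ (m - 1))) :
    q ^ (-(k : ℤ)) * (l : ℂ) * (∑ n ∈ Finset.range k, q ^ n * (n : ℂ) ^ (l - 1))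
      + (q ^ (-(k : ℤ)) * Complex.log q) * (∑ n ∈ Finset.range k, q ^ n * (n : ℂ) ^ l)
      = B l (k : ℂ) - q ^ (-(k : ℤ)) * B l 0 := by
  have hqne : q ≠ 0 := by
    intro h; simp [h] at hq0
  have hsum : ∀ m : ℕ, Summable (fun n : ℕ => q ^ n * (n : ℂ) ^ m) := by
    intro m
    have := summable_pow_mul_geometric_of_norm_lt_one (R := ℂ) m (r := q) (by simpa using hq1)
    exact this.congr (fun n => by ring)
  have shift : ∀ m : ℕ, (∑' n : ℕ, q ^ n * ((n : ℂ) + (k : ℂ)) ^ m)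
      = q ^ (-(k : ℤ)) * ((∑' n : ℕ, q ^ n * (n : ℂ) ^ m)
        - ∑ n ∈ Finset.range k, q ^ n * (n : ℂ) ^ m) := by
    intro m
    have h1 : (∑ n ∈ Finset.range k, q ^ n * (n : ℂ) ^ m)
        + (∑' n : ℕ, q ^ (n + k) * (((n + k : ℕ)) : ℂ) ^ m)
        = ∑' n : ℕ, q ^ n * (n : ℂ) ^ m := (hsum m).sum_add_tsum_nat_add k
    have h2 : (∑' n : ℕ, q ^ n * ((n : ℂ) + (k : ℂ)) ^ m)
        = q ^ (-(k : ℤ)) * ∑' n : ℕ, q ^ (n + k) * (((n + k : ℕ)) : ℂ) ^ m := by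
      rw [← tsum_mul_left]
      congr 1; funext n
      push_cast
      rw [pow_add, zpow_neg, zpow_natCast]
      field_simp
    rw [h2, ← h1]; ring
  rw [hB l (k : ℂ) hl, hB l 0 hl]
  simp only [add_zero]
  rw [shift l, shift (l - 1)]
  ring
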